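/- Assume Milman's reverse Brunn–Minkowski inequality: there is an absolute constant c ≥ 1 such that for any d and convex bodies B₁, B₂ ⊆ ℝ^d there exist γ₁, γ₂ ∈ SL_d(ℝ) with vol(t₁γ₁(B₁) + t₂γ₂(B₂))^{1/d} ≤ c(t₁ vol(B₁)^{1/d} + t₂ vol(B₂)^{1/d}) for all t₁, t₂ > 0. Then for any centrally symmetric convex body C ⊆ ℝ^d there exists an ellipsoid E ⊆ ℝ^d (an image of a Euclidean ball under an invertible linear map) with vol(E) = vol(C), and finite sets Y, Z ⊆ ℤ^d with |Y|, |Z| ≤ (3c)^d, such that C ∩ ℤ^d ⊆ Y + (E ∩ ℤ^d) and E ∩ ℤ^d ⊆ Z + (C ∩ ℤ^d). -/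

import Mathlib

open MeasureTheory
open scoped Pointwise ENNReal

/-- The integer lattice points in `ℝ^d`. -/
def intLattice (d : ℕ) : Set (EuclideanSpace ℝ (Fin d)) :=
  {x | ∀ i, ∃ n : ℤ, x i = n}

/-- Milman's reverse Brunn–Minkowski inequality with constant `c`. -/
def MilmanRBM (c : ℝ) : Prop :=
  ∀ (d : ℕ), 0 < d → ∀ B₁ B₂ : Set (EuclideanSpace ℝ (Fin d)),
    IsCompact B₁ → Convex ℝ B₁ → (interior B₁).Nonempty →
    IsCompact B₂ → Convex ℝ B₂ → (interior B₂).Nonempty →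
    ∃ γ₁ γ₂ : Matrix.SpecialLinearGroup (Fin d) ℝ,
      ∀ t₁ t₂ : ℝ, 0 < t₁ → 0 < t₂ →
        volume (t₁ • (Matrix.toEuclideanLin (γ₁ : Matrix (Fin d) (Fin d) ℝ) '' B₁) +
            t₂ • (Matrix.toEuclideanLin (γ₂ : Matrix (Fin d) (Fin d) ℝ) '' B₂)) ^
            ((1 : ℝ) / d) ≤
          ENNReal.ofReal c *
            (ENNReal.ofReal t₁ * volume B₁ ^ ((1 : ℝ) / d) +
             ENNReal.ofReal t₂ * volume B₂ ^ ((1 : ℝ) / d))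

lemma intLattice_zero (d : ℕ) : (0 : EuclideanSpace ℝ (Fin d)) ∈ intLattice d :=
  fun i => ⟨0, by simp⟩

lemma intLattice_sub {d : ℕ} {x y : EuclideanSpace ℝ (Fin d)}
    (hx : x ∈ intLattice d) (hy : y ∈ intLattice d) : x - y ∈ intLattice d := by
  intro i
  obtain ⟨n, hn⟩ := hx i
  obtain ⟨m, hm⟩ := hy i
  exact ⟨n - m, by simp [hn, hm]⟩

lemma abs_coord_le {d : ℕ} (x : EuclideanSpace ℝ (Fin d)) (i : Fin d) : |x i| ≤ ‖x‖ := by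
  rw [EuclideanSpace.norm_eq]
  rw [← Real.sqrt_sq_eq_abs]
  apply Real.sqrt_le_sqrt
  calc (x i)^2 ≤ ∑ j, (x j)^2 := by
        apply Finset.single_le_sum (f := fun j => (x j)^2) (fun j _ => sq_nonneg _) (Finset.mem_univ i)
    _ = ∑ j, ‖x j‖^2 := by simp [Real.norm_eq_abs, sq_abs]

lemma finite_inter_intLattice {d : ℕ} {K : Set (EuclideanSpace ℝ (Fin d))}
    (hK : IsCompact K) : (K ∩ intLattice d).Finite := by
  obtain ⟨M, hM⟩ := hK.isBounded.subset_closedBall 0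
  set N : ℤ := ⌈M⌉
  have : K ∩ intLattice d ⊆
      (fun n : Fin d → ℤ => (EuclideanSpace.equiv (Fin d) ℝ).symm (fun i => (n i : ℝ))) ''
        (Set.Icc (fun _ => -N) (fun _ => N)) := by
    rintro x ⟨hxK, hxL⟩
    choose n hn using hxL
    refine ⟨n, ?_, ?_⟩
    · constructor <;> intro i <;>
      · have h1 : |x i| ≤ M := le_trans (abs_coord_le x i)
          (by simpa [Metric.mem_closedBall, dist_zero_right] using hM hxK)
        have h2 : |(n i : ℝ)| ≤ (N : ℝ) := by
          rw [← hn i]; exact h1.trans (Int.le_ceil M)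
        rw [← Int.cast_abs, Int.cast_le] at h2
        simp only [abs_le] at h2
        first
          | exact h2.1
          | exact h2.2
    · ext i; exact (hn i).symm
  exact Set.Finite.subset (Set.Finite.image _ (Set.finite_Icc _ _)) this
lemma cover_aux {d : ℕ} (K L : Set (EuclideanSpace ℝ (Fin d)))
    (hK : IsCompact K) (hLcpt : IsCompact L) (hL0 : (0 : EuclideanSpace ℝ (Fin d)) ∈ L)
    (hLconv : Convex ℝ L) (hLsymm : ∀ x ∈ L, -x ∈ L) :
    ∃ Y : Set (EuclideanSpace ℝ (Fin d)), Y ⊆ K ∩ intLattice d ∧ Y.Finite ∧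
      (Y.ncard : ℝ≥0∞) * volume ((2:ℝ)⁻¹ • L) ≤ volume (K + (2:ℝ)⁻¹ • L) ∧
      K ∩ intLattice d ⊆ Y + (L ∩ intLattice d) := by
  classical
  set F := K ∩ intLattice d with hF
  have hFfin : F.Finite := finite_inter_intLattice hK
  set S : Set (Set (EuclideanSpace ℝ (Fin d))) :=
    {Y | Y ⊆ F ∧ ∀ y ∈ Y, ∀ y' ∈ Y, y ≠ y' → y - y' ∉ L} with hS
  have hSfin : S.Finite := hFfin.finite_subsets.subset (fun Y hY => hY.1)
  obtain ⟨Y, hYS, hYmax⟩ := Set.Finite.exists_maximalFor id S hSfin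
    ⟨∅, Set.empty_subset _, by simp⟩
  obtain ⟨hYF, hYsep⟩ := hYS
  have hYfin : Y.Finite := hFfin.subset hYF
  refine ⟨Y, hYF, hYfin, ?_, ?_⟩
  · -- volume bound
    set H := (2:ℝ)⁻¹ • L with hH
    have hHcpt : IsCompact H := by
      rw [hH, ← Set.image_smul]
      exact hLcpt.image (continuous_const_smul _)
    have hdisj : (hYfin.toFinset : Set _).PairwiseDisjoint (fun y : EuclideanSpace ℝ (Fin d) => y +ᵥ H) := by
      intro y hy y' hy' hne
      simp only [Set.Finite.coe_toFinset] at hy hy'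
      rw [Function.onFun, Set.disjoint_left]
      rintro z ⟨a, ha, rfl⟩ ⟨b, hb, hab⟩
      obtain ⟨l, hl, rfl⟩ := ha
      obtain ⟨l', hl', rfl⟩ := hb
      have h := hab
      simp only [vadd_eq_add] at h
      have h2 : y - y' = (2:ℝ)⁻¹ • l' - (2:ℝ)⁻¹ • l :=
        sub_eq_sub_iff_add_eq_add.mpr (by rw [← h]; abel)
      have hmem : y - y' ∈ L := by
        rw [h2, sub_eq_add_neg, ← smul_neg]
        exact hLconv hl' (hLsymm l hl) (by norm_num) (by norm_num) (by norm_num)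
      exact hYsep y hy y' hy' hne hmem
    have hmeas : ∀ y ∈ hYfin.toFinset, MeasurableSet (y +ᵥ H) := by
      intro y _
      exact (hHcpt.vadd y).measurableSet
    have hsub : (⋃ y ∈ hYfin.toFinset, y +ᵥ H) ⊆ K + H := by
      intro z hz
      simp only [Set.mem_iUnion] at hz
      obtain ⟨y, hy, hzy⟩ := hz
      obtain ⟨h, hh, rfl⟩ := hzy
      simp only [Set.Finite.mem_toFinset] at hy
      exact Set.add_mem_add (hYF hy).1 hh
    calc (Y.ncard : ℝ≥0∞) * volume H
        = ∑ y ∈ hYfin.toFinset, volume (y +ᵥ H) := by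
          simp only [measure_vadd]
          rw [Finset.sum_const, Set.ncard_eq_toFinset_card Y hYfin, nsmul_eq_mul]
      _ = volume (⋃ y ∈ hYfin.toFinset, y +ᵥ H) :=
          (measure_biUnion_finset hdisj hmeas).symm
      _ ≤ volume (K + H) := measure_mono hsub
  · -- covering
    intro x hx
    by_cases hxY : x ∈ Y
    · exact ⟨x, hxY, 0, ⟨hL0, intLattice_zero d⟩, by simp⟩
    · have : ∃ y ∈ Y, x - y ∈ L := by
        by_contra hcon
        push_neg at hcon
        have hYx : Y ∪ {x} ∈ S := by
          constructor
          · exact Set.union_subset hYF (by simpa using hx)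
          · rintro y (hy | hy) y' (hy' | hy') hne
            · exact hYsep y hy y' hy' hne
            · simp only [Set.mem_singleton_iff] at hy'
              subst hy'
              intro hmem
              exact hcon y hy (by simpa using hLsymm _ hmem)
            · simp only [Set.mem_singleton_iff] at hy
              subst hy
              exact hcon y' hy'
            · simp only [Set.mem_singleton_iff] at hy hy'
              exact absurd (hy.trans hy'.symm) hne
        have := hYmax hYx (Set.subset_union_left)
        simp only [id] at this
        exact hxY (this (Set.mem_union_right Y rfl))
      obtain ⟨y, hy, hxy⟩ := this
      exact ⟨y, hy, x - y, ⟨hxy, intLattice_sub hx.2 (hYF hy).2⟩, by module⟩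

lemma le_pow_volume {a b V : ℝ≥0∞} {d : ℕ} (hd : d ≠ 0)
    (h : a ^ ((1:ℝ)/d) ≤ b * V ^ ((1:ℝ)/d)) : a ≤ b ^ d * V := by
  have h1 := ENNReal.rpow_le_rpow h (by positivity : (0:ℝ) ≤ (d:ℝ))
  rw [← ENNReal.rpow_mul, one_div, inv_mul_cancel₀ (by exact_mod_cast hd), ENNReal.rpow_one] at h1
  rw [ENNReal.mul_rpow_of_nonneg _ _ (by positivity), ← ENNReal.rpow_mul,
      inv_mul_cancel₀ (show (d:ℝ) ≠ 0 by exact_mod_cast hd), ENNReal.rpow_one,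
      ENNReal.rpow_natCast] at h1
  exact h1

lemma card_le_of {n d : ℕ} {V : ℝ≥0∞} {b : ℝ} (hb : 0 ≤ b) (hV0 : V ≠ 0) (hVtop : V ≠ ∞)
    (h : (n : ℝ≥0∞) * (ENNReal.ofReal ((2:ℝ)⁻¹ ^ d) * V) ≤ (ENNReal.ofReal (b * (3/2)))^d * V) :
    (n : ℝ) ≤ (3 * b) ^ d := by
  rw [← mul_assoc, ENNReal.mul_le_mul_iff_left hV0 hVtop] at h
  have h2 : (n : ℝ≥0∞) ≤ ENNReal.ofReal ((3*b)^d) := by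
    calc (n:ℝ≥0∞) = (n : ℝ≥0∞) * ENNReal.ofReal ((2:ℝ)⁻¹^d) * ENNReal.ofReal ((2:ℝ)^d) := by
          rw [mul_assoc, ← ENNReal.ofReal_mul (by positivity), ← mul_pow]
          norm_num
      _ ≤ (ENNReal.ofReal (b * (3/2)))^d * ENNReal.ofReal ((2:ℝ)^d) := mul_le_mul_left h _
      _ = ENNReal.ofReal ((3*b)^d) := by
          rw [← ENNReal.ofReal_pow (by linarith), ← ENNReal.ofReal_mul (by positivity), ← mul_pow]
          ring_nf
  have h3 := ENNReal.toReal_mono ENNReal.ofReal_ne_top h2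
  rwa [ENNReal.toReal_natCast, ENNReal.toReal_ofReal (by positivity)] at h3

theorem stmt_12 (c : ℝ) (hc : 1 ≤ c) (hMilman : MilmanRBM c)
    (d : ℕ) (hd : 0 < d) (C : Set (EuclideanSpace ℝ (Fin d)))
    (hCcpt : IsCompact C) (hCconv : Convex ℝ C) (hCint : (interior C).Nonempty)
    (hCsymm : C = -C) :
    ∃ (E : Set (EuclideanSpace ℝ (Fin d)))
      (γ : EuclideanSpace ℝ (Fin d) ≃ₗ[ℝ] EuclideanSpace ℝ (Fin d)) (R : ℝ),
      0 < R ∧ E = γ '' Metric.closedBall 0 R ∧ volume E = volume C ∧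
      ∃ Y Z : Set (EuclideanSpace ℝ (Fin d)),
        Y ⊆ intLattice d ∧ Z ⊆ intLattice d ∧ Y.Finite ∧ Z.Finite ∧
        (Y.ncard : ℝ) ≤ (3 * c) ^ d ∧ (Z.ncard : ℝ) ≤ (3 * c) ^ d ∧
        C ∩ intLattice d ⊆ Y + (E ∩ intLattice d) ∧
        E ∩ intLattice d ⊆ Z + (C ∩ intLattice d) := by
  classical
  set V : ℝ≥0∞ := volume C with hVdef
  have hV0 : V ≠ 0 := (MeasureTheory.Measure.measure_pos_of_nonempty_interior volume hCint).ne'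
  have hVtop : V ≠ ∞ := hCcpt.measure_lt_top.ne
  set B1 : ℝ≥0∞ := volume (Metric.closedBall (0 : EuclideanSpace ℝ (Fin d)) 1) with hB1def
  have hB10 : B1 ≠ 0 := by
    refine (MeasureTheory.Measure.measure_pos_of_nonempty_interior volume ⟨0, ?_⟩).ne'
    exact Metric.ball_subset_interior_closedBall (Metric.mem_ball_self one_pos)
  have hB1top : B1 ≠ ∞ := (isCompact_closedBall _ _).measure_lt_top.ne
  have hx0 : (0:ℝ) < (V / B1).toReal :=
    ENNReal.toReal_pos (ENNReal.div_ne_zero.mpr ⟨hV0, hB1top⟩)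
      (ENNReal.div_lt_top hVtop hB10).ne
  set R : ℝ := (V / B1).toReal ^ ((d:ℝ)⁻¹) with hRdef
  have hR0 : 0 < R := Real.rpow_pos_of_pos hx0 _
  set B : Set (EuclideanSpace ℝ (Fin d)) := Metric.closedBall 0 R with hBdef
  have hBcpt : IsCompact B := isCompact_closedBall _ _
  have hBconv : Convex ℝ B := convex_closedBall _ _
  have hBint : (interior B).Nonempty :=
    ⟨0, Metric.ball_subset_interior_closedBall (Metric.mem_ball_self hR0)⟩
  have hfr : Module.finrank ℝ (EuclideanSpace ℝ (Fin d)) = d := finrank_euclideanSpace_fin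
  have hvolB : volume B = V := by
    rw [hBdef, Measure.addHaar_closedBall' volume _ hR0.le, hfr, ← hB1def]
    have hRd : R ^ d = (V / B1).toReal := by
      rw [hRdef, ← Real.rpow_natCast ((V / B1).toReal ^ ((d:ℝ)⁻¹)) d, ← Real.rpow_mul hx0.le,
        inv_mul_cancel₀ (show (d:ℝ) ≠ 0 by exact_mod_cast hd.ne'), Real.rpow_one]
    rw [hRd, ENNReal.ofReal_toReal (ENNReal.div_lt_top hVtop hB10).ne,
      ENNReal.div_mul_cancel hB10 hB1top]
  obtain ⟨γ₁, γ₂, hMil⟩ := hMilman d hd C B hCcpt hCconv hCint hBcpt hBconv hBint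
  -- volume invariance of SL images
  have himg : ∀ (g : Matrix.SpecialLinearGroup (Fin d) ℝ) (s : Set (EuclideanSpace ℝ (Fin d))),
      volume (Matrix.toEuclideanLin (g : Matrix (Fin d) (Fin d) ℝ) '' s) = volume s := by
    intro g s
    rw [Measure.addHaar_image_linearMap]
    rw [Matrix.toEuclideanLin_eq_toLin, LinearMap.det_toLin, Matrix.SpecialLinearGroup.det_coe]
    simp
  -- the linear equivalence
  set A : Matrix (Fin d) (Fin d) ℝ := ((γ₁⁻¹ * γ₂ : Matrix.SpecialLinearGroup (Fin d) ℝ) :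
      Matrix (Fin d) (Fin d) ℝ) with hAdef
  have hAdet : IsUnit A.det := by
    rw [hAdef, Matrix.SpecialLinearGroup.det_coe]; exact isUnit_one
  set γ : EuclideanSpace ℝ (Fin d) ≃ₗ[ℝ] EuclideanSpace ℝ (Fin d) :=
    Matrix.toLinearEquiv (PiLp.basisFun 2 ℝ (Fin d)) A hAdet with hγdef
  have hγA : ∀ x, γ x = Matrix.toEuclideanLin A x := by
    intro x
    rw [hγdef, Matrix.toLinearEquiv_apply, Matrix.toEuclideanLin_eq_toLin]
  have hcomp : ∀ s : Set (EuclideanSpace ℝ (Fin d)),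
      Matrix.toEuclideanLin (γ₁ : Matrix (Fin d) (Fin d) ℝ) '' (⇑γ '' s) =
        Matrix.toEuclideanLin (γ₂ : Matrix (Fin d) (Fin d) ℝ) '' s := by
    intro s
    rw [← Set.image_comp]
    have hfun : (⇑(Matrix.toEuclideanLin ((γ₁ : Matrix (Fin d) (Fin d) ℝ))) ∘ ⇑γ) =
        ⇑(Matrix.toEuclideanLin ((γ₂ : Matrix (Fin d) (Fin d) ℝ))) := by
      funext x
      simp only [Function.comp_apply, hγA]
      rw [Matrix.toEuclideanLin_eq_toLin]
      rw [← LinearMap.comp_apply, ← Matrix.toLin_mul]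
      congr 2
      rw [hAdef, ← Matrix.SpecialLinearGroup.coe_mul, mul_inv_cancel_left]
    rw [hfun]
  set E : Set (EuclideanSpace ℝ (Fin d)) := ⇑γ '' B with hEdef
  have hvolE : volume E = V := by
    have h1 := himg γ₁ E
    rw [hEdef, hcomp B, himg γ₂, hvolB] at h1
    rw [hEdef]
    exact h1.symm
  have hkey : ∀ t₁ t₂ : ℝ, 0 < t₁ → 0 < t₂ →
      volume (t₁ • C + t₂ • E) ≤ (ENNReal.ofReal (c * (t₁ + t₂)))^d * V := by
    intro t₁ t₂ ht₁ ht₂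
    have h := hMil t₁ t₂ ht₁ ht₂
    have himage : t₁ • (Matrix.toEuclideanLin ((γ₁ : Matrix (Fin d) (Fin d) ℝ)) '' C) +
        t₂ • (Matrix.toEuclideanLin ((γ₂ : Matrix (Fin d) (Fin d) ℝ)) '' B) =
        Matrix.toEuclideanLin ((γ₁ : Matrix (Fin d) (Fin d) ℝ)) '' (t₁ • C + t₂ • E) := by
      rw [hEdef, Set.image_add, image_smul_set, image_smul_set, hcomp B]
    rw [himage, himg γ₁, hvolB] at h
    have h2 : ENNReal.ofReal c *
        (ENNReal.ofReal t₁ * V ^ ((1:ℝ)/d) + ENNReal.ofReal t₂ * V ^ ((1:ℝ)/d))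
        = ENNReal.ofReal (c * (t₁ + t₂)) * V ^ ((1:ℝ)/d) := by
      rw [← add_mul, ← ENNReal.ofReal_add ht₁.le ht₂.le, ← mul_assoc,
        ← ENNReal.ofReal_mul (by linarith)]
    rw [h2] at h
    exact le_pow_volume hd.ne' h
  have h32 : (1:ℝ) + 2⁻¹ = 3/2 := by norm_num
  have hb1 : volume (C + (2:ℝ)⁻¹ • E) ≤ (ENNReal.ofReal (c * (3/2)))^d * V := by
    have h := hkey 1 2⁻¹ one_pos (by norm_num)
    rwa [one_smul, h32] at h
  have hb2 : volume (E + (2:ℝ)⁻¹ • C) ≤ (ENNReal.ofReal (c * (3/2)))^d * V := by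
    have h := hkey 2⁻¹ 1 (by norm_num) one_pos
    rwa [one_smul, add_comm ((2:ℝ)⁻¹ • C) E, add_comm ((2:ℝ)⁻¹) 1, h32] at h
  have hγcont : Continuous ⇑γ := by
    have h := LinearMap.continuous_of_finiteDimensional
      (γ : EuclideanSpace ℝ (Fin d) →ₗ[ℝ] EuclideanSpace ℝ (Fin d))
    rwa [LinearEquiv.coe_coe] at h
  have hEcpt : IsCompact E := hBcpt.image hγcont
  have hE0 : (0 : EuclideanSpace ℝ (Fin d)) ∈ E :=
    ⟨0, Metric.mem_closedBall_self hR0.le, map_zero γ⟩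
  have hEconv : Convex ℝ E := hBconv.is_linear_image ⟨map_add γ, map_smul γ⟩
  have hEsymm : ∀ x ∈ E, -x ∈ E := by
    rintro x ⟨b, hb, rfl⟩
    refine ⟨-b, ?_, by rw [map_neg]⟩
    rw [hBdef, Metric.mem_closedBall, dist_zero_right] at hb ⊢
    rwa [norm_neg]
  have hCsymm' : ∀ x ∈ C, -x ∈ C := by
    intro x hx
    have h : -x ∈ -C := Set.neg_mem_neg.mpr hx
    rwa [← hCsymm] at h
  have hC0 : (0 : EuclideanSpace ℝ (Fin d)) ∈ C := by
    obtain ⟨x, hx⟩ := hCint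
    have hx' : x ∈ C := interior_subset hx
    have h := hCconv hx' (hCsymm' x hx') (by norm_num : (0:ℝ) ≤ 2⁻¹)
      (by norm_num : (0:ℝ) ≤ 2⁻¹) (by norm_num)
    rwa [smul_neg, add_neg_cancel] at h
  have hvolhalfE : volume ((2:ℝ)⁻¹ • E) = ENNReal.ofReal ((2:ℝ)⁻¹ ^ d) * V := by
    rw [Measure.addHaar_smul, hfr, hvolE, abs_of_pos (by positivity)]
  have hvolhalfC : volume ((2:ℝ)⁻¹ • C) = ENNReal.ofReal ((2:ℝ)⁻¹ ^ d) * V := by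
    rw [Measure.addHaar_smul, hfr, abs_of_pos (by positivity)]
  obtain ⟨Y, hYsub, hYfin, hYvol, hYcov⟩ := cover_aux C E hCcpt hEcpt hE0 hEconv hEsymm
  obtain ⟨Z, hZsub, hZfin, hZvol, hZcov⟩ := cover_aux E C hEcpt hCcpt hC0 hCconv hCsymm'
  have hYcard : (Y.ncard : ℝ) ≤ (3 * c) ^ d := by
    refine card_le_of (by linarith) hV0 hVtop ?_
    rw [← hvolhalfE]
    exact hYvol.trans hb1
  have hZcard : (Z.ncard : ℝ) ≤ (3 * c) ^ d := by
    refine card_le_of (by linarith) hV0 hVtop ?_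
    rw [← hvolhalfC]
    exact hZvol.trans hb2
  exact ⟨E, γ, R, hR0, hEdef, hvolE, Y, Z, fun y hy => (hYsub hy).2, fun z hz => (hZsub hz).2,
    hYfin, hZfin, hYcard, hZcard, hYcov, hZcov⟩
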